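/- arXiv:2305.06465 — 2 statements merged into one kernel-verified Lean document; each statement's English description precedes it below -/
import Mathlib

section
/- Let F be a rank-k canonical exponential family with log-partition A and conjugate prior ρ_F(θ) = H(τ, m) exp(⟨τ,θ⟩ − m A(θ)), and let N be the linearly nested submodel with parameter η ∈ ℝ^ℓ, θ = Mᵀη for a full-rank ℓ×k matrix M, log-partition B(η) = A(Mᵀη), and conjugate prior ρ_N(η) = G(υ, w) exp(⟨υ, η⟩ − w B(η)). Then the minimum over (υ, w) of the cross-entropy-type quantity −E_N[log(ρ_F(Mᵀη)/ρ_N(η))] equals log(G(Mτ, m)/H(τ, m)), and this minimum is achieved at υ = Mτ and w = m. -/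
open MeasureTheory Finset Matrix

/-- Encompassing-prior matching (Theorem 2.2, first part): for the conjugate prior
`ρ_F(θ) = H(τ,m) exp(⟨τ,θ⟩ − m A θ)` of the full model and conjugate priors
`ρ_N(η; υ, w) = G(υ,w) exp(⟨υ,η⟩ − w A(Mᵀη))` of the linearly nested submodel, the
quantity `−E_N[log(ρ_F(Mᵀη)/ρ_N(η))]` attains its minimum value
`log(G(Mτ, m)/H(τ, m))` at `υ = Mτ`, `w = m`. -/
theorem stmt_9 (k l : ℕ) (M : Matrix (Fin l) (Fin k) ℝ) (hM : M.rank = l)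
    (A : (Fin k → ℝ) → ℝ) (τ : Fin k → ℝ) (m : ℝ) (hm : 0 < m)
    (IH : (Fin k → ℝ) → ℝ → ℝ)
    (hIH : IH = fun τ' m' => ∫ θ : Fin k → ℝ, Real.exp ((∑ i, τ' i * θ i) - m' * A θ))
    (H : (Fin k → ℝ) → ℝ → ℝ) (hH : H = fun τ' m' => (IH τ' m')⁻¹)
    (B : (Fin l → ℝ) → ℝ) (hB : B = fun η => A (M.transpose.mulVec η))
    (IG : (Fin l → ℝ) → ℝ → ℝ)
    (hIG : IG = fun υ w => ∫ η : Fin l → ℝ, Real.exp ((∑ j, υ j * η j) - w * B η))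
    (G : (Fin l → ℝ) → ℝ → ℝ) (hG : G = fun υ w => (IG υ w)⁻¹)
    (ρF : (Fin k → ℝ) → ℝ)
    (hρF : ρF = fun θ => H τ m * Real.exp ((∑ i, τ i * θ i) - m * A θ))
    (ρN : (Fin l → ℝ) → ℝ → (Fin l → ℝ) → ℝ)
    (hρN : ρN = fun υ w η => G υ w * Real.exp ((∑ j, υ j * η j) - w * B η))
    (obj : (Fin l → ℝ) → ℝ → ℝ)
    (hobj : obj = fun υ w =>
      -∫ η : Fin l → ℝ, ρN υ w η * Real.log (ρF (M.transpose.mulVec η) / ρN υ w η))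
    (hIHpos : 0 < IH τ m) (hIGpos : 0 < IG (M.mulVec τ) m)
    (hInt0 : Integrable (fun η : Fin l → ℝ =>
      ρN (M.mulVec τ) m η * Real.log (ρF (M.transpose.mulVec η) / ρN (M.mulVec τ) m η))) :
    obj (M.mulVec τ) m = Real.log (G (M.mulVec τ) m / H τ m) ∧
    ∀ υ : Fin l → ℝ, ∀ w : ℝ, 0 < IG υ w →
      Integrable (fun η : Fin l → ℝ =>
        ρN υ w η * Real.log (ρF (M.transpose.mulVec η) / ρN υ w η)) →
      Real.log (G (M.mulVec τ) m / H τ m) ≤ obj υ w := by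
  have key : ∀ η : Fin l → ℝ,
      (∑ i, τ i * M.transpose.mulVec η i) = ∑ j, M.mulVec τ j * η j := by
    intro η
    have h1 : (∑ i, τ i * M.transpose.mulVec η i) = τ ⬝ᵥ M.transpose.mulVec η := rfl
    have h2 : (∑ j, M.mulVec τ j * η j) = M.mulVec τ ⬝ᵥ η := rfl
    rw [h1, h2, Matrix.dotProduct_mulVec, Matrix.vecMul_transpose]
  -- abbreviations
  set a : ℝ := IH τ m with ha
  set Eτ : (Fin l → ℝ) → ℝ :=
    fun η => Real.exp ((∑ j, M.mulVec τ j * η j) - m * A (M.transpose.mulVec η)) with hEτ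
  set b : ℝ := IG (M.mulVec τ) m with hb
  have hbval : b = ∫ η : Fin l → ℝ, Eτ η := by rw [hb, hIG, hB]
  have hρFval : ∀ η : Fin l → ℝ, ρF (M.transpose.mulVec η) = a⁻¹ * Eτ η := by
    intro η
    rw [hρF, hH]
    simp only [hEτ, key η]
    rfl
  have hρNτ : ∀ η : Fin l → ℝ, ρN (M.mulVec τ) m η = b⁻¹ * Eτ η := by
    intro η
    rw [hρN, hG, hB]
  have hbpos : 0 < b := hIGpos
  have hapos : 0 < a := hIHpos
  set c : ℝ := a⁻¹ * b with hc
  have hcpos : 0 < c := mul_pos (inv_pos.mpr hapos) hbpos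
  have hgoalval : Real.log (G (M.mulVec τ) m / H τ m) = Real.log c⁻¹ := by
    simp only [hG, hH]
    rw [← hb, ← ha, hc]
    congr 1
    rw [div_eq_mul_inv, inv_inv, mul_inv, inv_inv, mul_comm]
  have intEτ : Integrable Eτ := by
    by_contra hcon
    rw [integral_undef hcon] at hbval
    rw [hbval] at hbpos
    exact lt_irrefl 0 hbpos
  constructor
  · -- part 1
    simp only [hobj, hgoalval]
    have hint : ∀ η : Fin l → ℝ,
        ρN (M.mulVec τ) m η * Real.log (ρF (M.transpose.mulVec η) / ρN (M.mulVec τ) m η)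
        = (b⁻¹ * Real.log c) * Eτ η := by
      intro η
      rw [hρFval η, hρNτ η]
      have hE : Eτ η ≠ 0 := (Real.exp_pos _).ne'
      rw [mul_div_mul_right _ _ hE]
      have : a⁻¹ / b⁻¹ = c := by rw [hc]; field_simp
      rw [this]; ring
    simp only [hint]
    rw [integral_const_mul, ← hbval]
    rw [Real.log_inv]
    field_simp
  · -- part 2
    intro υ w hIGw hint
    simp only [hobj, hgoalval]
    set Eυ : (Fin l → ℝ) → ℝ :=
      fun η => Real.exp ((∑ j, υ j * η j) - w * A (M.transpose.mulVec η)) with hEυ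
    set b' : ℝ := IG υ w with hb'
    have hb'val : b' = ∫ η : Fin l → ℝ, Eυ η := by rw [hb', hIG, hB]
    have hb'pos : 0 < b' := hIGw
    have intEυ : Integrable Eυ := by
      by_contra hcon
      rw [integral_undef hcon] at hb'val
      rw [hb'val] at hb'pos
      exact lt_irrefl 0 hb'pos
    have hρNval : ∀ η : Fin l → ℝ, ρN υ w η = b'⁻¹ * Eυ η := by
      intro η; rw [hρN, hG, hB]
    have hpt : ∀ η : Fin l → ℝ,
        ρN υ w η * Real.log (ρF (M.transpose.mulVec η) / ρN υ w η)
          ≤ (a⁻¹ / c) * Eτ η - b'⁻¹ * Eυ η + (b'⁻¹ * Real.log c) * Eυ η := by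
      intro η
      rw [hρFval η, hρNval η]
      have hEp : (0:ℝ) < Eτ η := Real.exp_pos _
      have hEq : (0:ℝ) < Eυ η := Real.exp_pos _
      set p : ℝ := b'⁻¹ * Eυ η with hp
      set q : ℝ := a⁻¹ * Eτ η with hq
      have hppos : 0 < p := mul_pos (inv_pos.mpr hb'pos) hEq
      have hqpos : 0 < q := mul_pos (inv_pos.mpr hapos) hEp
      have hlog : Real.log (q / p) = Real.log (q / p / c) + Real.log c := by
        rw [Real.log_div (by positivity) (ne_of_gt hcpos)]
        ring
      have hle : Real.log (q / p / c) ≤ q / p / c - 1 :=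
        Real.log_le_sub_one_of_pos (by positivity)
      have hkey : p * Real.log (q / p) ≤ q / c - p + p * Real.log c := by
        rw [hlog, mul_add]
        have h1 : p * Real.log (q / p / c) ≤ p * (q / p / c - 1) :=
          mul_le_mul_of_nonneg_left hle hppos.le
        have h2 : p * (q / p / c - 1) = q / c - p := by
          field_simp
        linarith [h1]
      calc p * Real.log (q / p) ≤ q / c - p + p * Real.log c := hkey
        _ = (a⁻¹ / c) * Eτ η - b'⁻¹ * Eυ η + (b'⁻¹ * Real.log c) * Eυ η := by
            rw [hp, hq]; ring
    have hintg : Integrable (fun η : Fin l → ℝ =>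
        (a⁻¹ / c) * Eτ η - b'⁻¹ * Eυ η + (b'⁻¹ * Real.log c) * Eυ η) :=
      ((intEτ.const_mul _).sub (intEυ.const_mul _)).add (intEυ.const_mul _)
    have i1 : Integrable (fun η : Fin l → ℝ => (a⁻¹ / c) * Eτ η) := intEτ.const_mul _
    have i2 : Integrable (fun η : Fin l → ℝ => b'⁻¹ * Eυ η) := intEυ.const_mul _
    have i3 : Integrable (fun η : Fin l → ℝ => (b'⁻¹ * Real.log c) * Eυ η) := intEυ.const_mul _
    have i4 : Integrable (fun η : Fin l → ℝ => (a⁻¹ / c) * Eτ η - b'⁻¹ * Eυ η) := i1.sub i2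
    have hIg : (∫ η : Fin l → ℝ,
        ((a⁻¹ / c) * Eτ η - b'⁻¹ * Eυ η + (b'⁻¹ * Real.log c) * Eυ η)) = Real.log c := by
      rw [integral_add i4 i3, integral_sub i1 i2,
        integral_const_mul, integral_const_mul, integral_const_mul, ← hbval, ← hb'val]
      have h1 : a⁻¹ / c * b = 1 := by rw [hc]; field_simp
      have h2 : b'⁻¹ * b' = 1 := inv_mul_cancel₀ (ne_of_gt hb'pos)
      have h3 : b'⁻¹ * Real.log c * b' = Real.log c := by
        rw [mul_comm, ← mul_assoc, mul_comm b', h2, one_mul]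
      rw [h1, h2, h3]
      ring
    have hmono : (∫ η : Fin l → ℝ,
        ρN υ w η * Real.log (ρF (M.transpose.mulVec η) / ρN υ w η))
        ≤ ∫ η : Fin l → ℝ,
          ((a⁻¹ / c) * Eτ η - b'⁻¹ * Eυ η + (b'⁻¹ * Real.log c) * Eυ η) :=
      integral_mono hint hintg hpt
    rw [hIg] at hmono
    rw [Real.log_inv]
    linarith
end

section
/- Let G be the complete graph on n_v vertices with n possible edges, modeled by a rank-1 K-block SBM with known memberships, where the within/between block edge counts satisfy S_{ij} ≥ 1 and Σ_{i≤j} S_{ij} = n, and all O_{ij} = 0. With independent Beta(2,1) priors on the latent positions x_1,...,x_K, the evidence equals E_SBM = 2^K · Π_{i=1}^K 1/(2S_{ii} + Σ_{j≠i} S_{ij} + 2), and since Σ_{i=1}^K (2S_{ii} + Σ_{j≠i} S_{ij} + 2) = 2n + 2K and each factor exceeds 2, the product lemma yields E_SBM < 1/(n+1) = E_ER. Hence ER has strictly larger evidence than the SBM on the complete graph. -/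
open Finset

/-- Product lemma (weak form): if every factor exceeds 2 then
`2^|s| * (Σ x_i - 2|s| + 2) ≤ 2 * Π x_i`. -/
lemma prod_lemma_weak {ι : Type*} (s : Finset ι) (x : ι → ℝ)
    (hx : ∀ i ∈ s, 2 < x i) :
    2 ^ s.card * ((∑ i ∈ s, x i) - 2 * s.card + 2) ≤ 2 * ∏ i ∈ s, x i := by
  induction s using Finset.cons_induction with
  | empty => simp
  | cons a t ha ih =>
    have hxa : 2 < x a := hx a (Finset.mem_cons_self a t)
    have hxt : ∀ i ∈ t, 2 < x i := fun i hi => hx i (Finset.mem_cons.2 (Or.inr hi))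
    have ih' := ih hxt
    have hT : 2 * (t.card : ℝ) ≤ ∑ i ∈ t, x i := by
      calc 2 * (t.card : ℝ) = ∑ _i ∈ t, (2:ℝ) := by
            rw [Finset.sum_const, nsmul_eq_mul]; ring
        _ ≤ ∑ i ∈ t, x i := Finset.sum_le_sum (fun i hi => (hxt i hi).le)
    have hpow : (0:ℝ) < 2 ^ t.card := by positivity
    rw [Finset.card_cons, Finset.sum_cons, Finset.prod_cons, pow_succ]
    push_cast
    have hmul := mul_le_mul_of_nonneg_left ih' (by linarith : (0:ℝ) ≤ x a)
    nlinarith [mul_nonneg (mul_nonneg hpow.le (by linarith : (0:ℝ) ≤ x a - 2))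
      (by linarith : (0:ℝ) ≤ (∑ i ∈ t, x i) - 2 * t.card)]

/-- Complete graph, rank-1 K-block SBM with known memberships: with Beta(2,1) priors the
evidence is `E_SBM = 2^K ∏ 1/(2S_ii + Σ_{j≠i} S_ij + 2)`; since the `K` factors
`2S_ii + Σ_{j≠i} S_ij + 2` exceed 2 and sum to `2n + 2K`, the product lemma gives
`E_SBM < 1/(n+1) = E_ER`, so ER has strictly larger evidence. -/
theorem stmt_14 (K n : ℕ) (hK : 2 ≤ K) (S : Fin K → Fin K → ℕ)
    (hsym : ∀ i j, S i j = S j i) (hpos : ∀ i j, 1 ≤ S i j)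
    (hsum : ∑ i, ∑ j ∈ Finset.univ.filter (fun j => i ≤ j), S i j = n)
    (d : Fin K → ℕ)
    (hd : d = fun i => 2 * S i i + ∑ j ∈ Finset.univ.filter (fun j => j ≠ i), S i j) :
    (∑ i, ((d i : ℝ) + 2)) = 2 * n + 2 * K ∧
    (2:ℝ) ^ K * ∏ i, 1 / ((d i : ℝ) + 2) < 1 / ((n : ℝ) + 1) := by
  -- ∑ d i = 2 n over ℕ
  have hdsum : ∑ i, d i = 2 * n := by
    subst hd
    -- rewrite each inner term
    have h1 : ∀ i : Fin K, 2 * S i i + ∑ j ∈ Finset.univ.filter (fun j => j ≠ i), S i j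
        = S i i + ∑ j, S i j := by
      intro i
      have : ∑ j, S i j = S i i + ∑ j ∈ Finset.univ.erase i, S i j :=
        (Finset.add_sum_erase _ _ (Finset.mem_univ i)).symm
      rw [this]
      have : (Finset.univ.filter (fun j => j ≠ i)) = Finset.univ.erase i := by
        ext j; simp [Finset.mem_erase, and_comm]
      rw [this]; ring
    simp only [h1]
    rw [Finset.sum_add_distrib]
    -- full sum splits
    have hsplit : ∀ i : Fin K, ∑ j, S i j
        = (∑ j ∈ Finset.univ.filter (fun j => i ≤ j), S i j)
          + ∑ j ∈ Finset.univ.filter (fun j => j < i), S i j := by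
      intro i
      rw [← Finset.sum_filter_add_sum_filter_not Finset.univ (fun j => i ≤ j)]
      congr 1
      apply Finset.sum_congr _ (fun _ _ => rfl)
      ext j; simp [not_le]
    have hswap : ∑ i, ∑ j ∈ Finset.univ.filter (fun j => j < i), S i j
        = ∑ i, ∑ j ∈ Finset.univ.filter (fun j => i < j), S i j := by
      calc ∑ i, ∑ j ∈ Finset.univ.filter (fun j => j < i), S i j
          = ∑ i, ∑ j, if j < i then S i j else 0 := by
            simp [Finset.sum_filter]
        _ = ∑ j, ∑ i, if j < i then S i j else 0 := Finset.sum_comm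
        _ = ∑ j, ∑ i ∈ Finset.univ.filter (fun i => j < i), S i j := by
            simp [Finset.sum_filter]
        _ = ∑ i, ∑ j ∈ Finset.univ.filter (fun j => i < j), S i j := by
            apply Finset.sum_congr rfl
            intro i _
            apply Finset.sum_congr rfl
            intro j _
            exact (hsym i j).symm
    have hle_split : ∀ i : Fin K, ∑ j ∈ Finset.univ.filter (fun j => i ≤ j), S i j
        = S i i + ∑ j ∈ Finset.univ.filter (fun j => i < j), S i j := by
      intro i
      have hmem : i ∈ Finset.univ.filter (fun j => i ≤ j) := by simp
      rw [← Finset.add_sum_erase _ _ hmem]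
      congr 1
      apply Finset.sum_congr _ (fun _ _ => rfl)
      ext j
      simp only [Finset.mem_erase, Finset.mem_filter, Finset.mem_univ, true_and]
      constructor
      · rintro ⟨hne, hle⟩; exact lt_of_le_of_ne hle (fun h => hne h.symm)
      · intro h; exact ⟨(ne_of_lt h).symm, h.le⟩
    simp only [hsplit]
    simp only [Finset.sum_add_distrib, hswap]
    simp only [hle_split] at hsum ⊢
    simp only [Finset.sum_add_distrib] at hsum ⊢
    omega
  have hKn : (1:ℕ) ≤ K := le_trans (by norm_num) hK
  constructor
  · push_cast [Finset.sum_add_distrib]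
    rw [← Nat.cast_sum, hdsum]
    push_cast
    simp [Finset.card_univ]
    ring
  -- Part 2
  · set a : Fin K → ℝ := fun i => (d i : ℝ) + 2 with ha_def
    have ha2 : ∀ i, 2 < a i := by
      intro i
      have : 1 ≤ d i := by
        subst hd
        have := hpos i i
        simp only []
        omega
      have : (1:ℝ) ≤ (d i : ℝ) := by exact_mod_cast this
      simp only [ha_def]; linarith
    have hapos : ∀ i, 0 < a i := fun i => lt_trans (by norm_num) (ha2 i)
    have hsa : ∑ i, a i = 2 * n + 2 * K := by
      simp only [ha_def, Finset.sum_add_distrib]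
      rw [← Nat.cast_sum, hdsum]
      push_cast
      simp [Finset.card_univ]
      ring
    -- pick an element
    have hKpos : 0 < K := lt_of_lt_of_le (by norm_num) hK
    let i0 : Fin K := ⟨0, hKpos⟩
    have hprod : ∏ i, a i = a i0 * ∏ i ∈ Finset.univ.erase i0, a i :=
      (Finset.mul_prod_erase _ _ (Finset.mem_univ i0)).symm
    have hcard : (Finset.univ.erase i0).card = K - 1 := by
      rw [Finset.card_erase_of_mem (Finset.mem_univ i0), Finset.card_univ, Fintype.card_fin]
    have hsumerase : ∑ i ∈ Finset.univ.erase i0, a i = 2 * n + 2 * K - a i0 := by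
      have h := Finset.add_sum_erase Finset.univ a (Finset.mem_univ i0)
      rw [hsa] at h
      linarith
    set T : ℝ := ∑ i ∈ Finset.univ.erase i0, a i with hT_def
    set P : ℝ := ∏ i ∈ Finset.univ.erase i0, a i with hP_def
    have hweak := prod_lemma_weak (Finset.univ.erase i0) a
      (fun i _ => ha2 i)
    rw [hcard, ← hT_def, ← hP_def] at hweak
    have hcardR : ((K - 1 : ℕ) : ℝ) = (K : ℝ) - 1 := by
      have : (1:ℕ) ≤ K := hKn
      push_cast [this]
      ring
    rw [hcardR] at hweak
    -- T > 2 (K-1)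
    have hTgt : 2 * ((K:ℝ) - 1) < T := by
      have hne : (Finset.univ.erase i0).Nonempty := by
        rw [← Finset.card_pos, hcard]; omega
      have : ∑ _i ∈ Finset.univ.erase i0, (2:ℝ) < ∑ i ∈ Finset.univ.erase i0, a i :=
        Finset.sum_lt_sum_of_nonempty hne (fun i _ => ha2 i)
      rw [Finset.sum_const, nsmul_eq_mul, hcard, hcardR] at this
      linarith
    have hPpos : 0 < P := Finset.prod_pos (fun i _ => hapos i)
    have hai0 : 2 < a i0 := ha2 i0
    have hpowpos : (0:ℝ) < 2 ^ (K - 1) := by positivity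
    -- key: ∏ a i > 2^K * (n+1)
    have hpowK : (2:ℝ) ^ K = 2 * 2 ^ (K - 1) := by
      rw [← pow_succ']
      congr 1
      omega
    have hkey : 2 ^ K * ((n:ℝ) + 1) < ∏ i, a i := by
      rw [hprod, hpowK]
      have h1 : a i0 * (2 ^ (K-1) * (T - 2 * ((K:ℝ) - 1) + 2)) ≤ a i0 * (2 * P) :=
        mul_le_mul_of_nonneg_left hweak (hapos i0).le
      have hT2 : T = 2 * n + 2 * K - a i0 := hsumerase
      nlinarith [mul_pos (mul_pos hpowpos (by linarith : (0:ℝ) < a i0 - 2))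
        (by linarith : (0:ℝ) < T - 2 * ((K:ℝ) - 1))]
    have hn1 : (0:ℝ) < (n:ℝ) + 1 := by positivity
    have hPall : (0:ℝ) < ∏ i, a i := Finset.prod_pos (fun i _ => hapos i)
    have heq : ∏ i, 1 / a i = (∏ i, a i)⁻¹ := by
      simp [one_div]
    simp only [ha_def] at heq ⊢
    rw [heq, ← div_eq_mul_inv, div_lt_div_iff₀ hPall hn1]
    nlinarith [hkey]
end
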